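/- arXiv:1603.06874 — 3 statements merged into one kernel-verified Lean document; each statement's English description precedes it below -/
import Mathlib

section
/- Let R be a commutative local ring, e ≥ 2 an integer, A := R[X]/(X^e), π the image of X, E a finite free A-module of rank h₁, and let 0 = F^{[0]} ⊆ F^{[1]} ⊆ ⋯ ⊆ F^{[e]} be a Pappas–Rapoport filtration of rank d₁ on E, with 0 < d₁ < h₁. For 1 ≤ j ≤ e set F^{[e+j]} := {x ∈ E : π^j·x ∈ F^{[e−j]}}. Fix 2 ≤ j ≤ e. Multiplication by π induces well-defined R-linear maps μ : F^{[j]}/F^{[j−1]} → F^{[j−1]}/F^{[j−2]} between finite free R-modules of rank d₁, and μ^D : F^{[2e+2−j]}/F^{[2e+1−j]} → F^{[2e+1−j]}/F^{[2e−j]} between finite free R-modules of rank h₁ − d₁. Then for any choice of R-bases of these four free modules, the determinants of the representing matrices of μ and μ^D differ by multiplication by a unit of R; in particular they generate the same ideal of R. (This is the compatibility of the primitive Hasse invariants with duality: m^{[j]}(G) = m^{[j]}(G^D) under the canonical isomorphism of determinant lines.) -/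
/-- The ring `A = R[X]/(X^e)`. -/
abbrev TruncPoly (R : Type*) [CommRing R] (e : ℕ) : Type _ :=
  Polynomial R ⧸ Ideal.span {(Polynomial.X : Polynomial R) ^ e}

/-- The image `π` of `X` in `A = R[X]/(X^e)`. -/
noncomputable def piX (R : Type*) [CommRing R] (e : ℕ) : TruncPoly R e :=
  Ideal.Quotient.mk _ Polynomial.X

/-- Multiplication by `π^k`, as an `R`-linear endomorphism of a module over `R[X]/(X^e)`. -/
noncomputable def mulPi (R : Type*) [CommRing R] (e : ℕ)
    (E : Type*) [AddCommGroup E] [Module (TruncPoly R e) E] [Module R E]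
    [IsScalarTower R (TruncPoly R e) E] (k : ℕ) : E →ₗ[R] E :=
  (LinearMap.lsmul (TruncPoly R e) E (piX R e ^ k)).restrictScalars R

/-- A Pappas–Rapoport filtration of rank `d₁` on a module `E` over `A = R[X]/(X^e)`:
a chain of `R`-submodules `0 = F^{[0]} ⊆ F^{[1]} ⊆ ⋯ ⊆ F^{[e]}` of `E` such that each
`F^{[j]}` is an `R`-module direct summand of `E`, each quotient `F^{[j]}/F^{[j-1]}` is a
finite free `R`-module of rank `d₁`, and `π·F^{[j]} ⊆ F^{[j-1]}` for `1 ≤ j ≤ e`. -/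
def IsPRFiltration (R : Type*) [CommRing R] (e : ℕ)
    (E : Type*) [AddCommGroup E] [Module (TruncPoly R e) E] [Module R E]
    [IsScalarTower R (TruncPoly R e) E] (d₁ : ℕ) (F : ℕ → Submodule R E) : Prop :=
  F 0 = ⊥ ∧
  (∀ j < e, F j ≤ F (j + 1)) ∧
  (∀ j ≤ e, ∃ q : Submodule R E, IsCompl (F j) q) ∧
  (∀ j < e,
    Module.Finite R (↥(F (j + 1)) ⧸ (F j).comap (F (j + 1)).subtype) ∧
    Module.Free R (↥(F (j + 1)) ⧸ (F j).comap (F (j + 1)).subtype) ∧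
    Module.finrank R (↥(F (j + 1)) ⧸ (F j).comap (F (j + 1)).subtype) = d₁) ∧
  (∀ j < e, ∀ x ∈ F (j + 1), piX R e • x ∈ F j)

/-- The member `F^{[e+j]} := {x ∈ E : π^j·x ∈ F^{[e-j]}}` of the extended
(dual) Pappas–Rapoport filtration. -/
noncomputable def PRext (R : Type*) [CommRing R] (e : ℕ)
    (E : Type*) [AddCommGroup E] [Module (TruncPoly R e) E] [Module R E]
    [IsScalarTower R (TruncPoly R e) E] (F : ℕ → Submodule R E) (j : ℕ) : Submodule R E :=
  (F (e - j)).comap (mulPi R e E j)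

/-- The submodule `F'^{[j]} := {x ∈ E : π·x ∈ F^{[j]}}`. -/
noncomputable def PRdiv (R : Type*) [CommRing R] (e : ℕ)
    (E : Type*) [AddCommGroup E] [Module (TruncPoly R e) E] [Module R E]
    [IsScalarTower R (TruncPoly R e) E] (F : ℕ → Submodule R E) (j : ℕ) : Submodule R E :=
  (F j).comap (mulPi R e E 1)


section Part2
open Matrix LinearMap

variable {R : Type*} [CommRing R]

/-- In a local ring, mutual divisibility gives association. -/
lemma assoc_of_mutual {R : Type*} [CommRing R] [IsLocalRing R] {a b x y : R}
    (h1 : a = x * b) (h2 : b = y * a) : ∃ u : Rˣ, a = u * b := by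
  by_cases h : IsUnit x
  · exact ⟨h.unit, by simpa using h1⟩
  · have hx : x ∈ nonunits R := h
    have hxy : x * y ∈ nonunits R := fun hu => h (isUnit_of_mul_isUnit_left hu)
    have hunit : IsUnit (1 - x * y) := IsLocalRing.isUnit_one_sub_self_of_mem_nonunits _ hxy
    have ha : (1 - x * y) * a = 0 := by
      have h3 : a = x * y * a := by rw [mul_assoc, ← h2, ← h1]
      linear_combination h3
    have ha0 : a = 0 := by
      obtain ⟨u, hu⟩ := hunit
      calc a = (u⁻¹ * u) * a := by simp
        _ = u⁻¹ * ((1-x*y) * a) := by rw [hu]; ring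
        _ = 0 := by rw [ha]; ring
    have hb0 : b = 0 := by rw [h2, ha0, mul_zero]
    exact ⟨1, by simp [ha0, hb0]⟩

/-- cokernel of a matrix -/
abbrev mcoker {n : ℕ} (M : Matrix (Fin n) (Fin n) R) : Type _ :=
  (Fin n → R) ⧸ LinearMap.range M.mulVecLin

lemma coker_PMQ {s : ℕ} (P M Q : Matrix (Fin s) (Fin s) R)
    (hP : IsUnit P.det) (hQ : IsUnit Q.det) :
    Nonempty (mcoker (P * M * Q) ≃ₗ[R] mcoker M) := by
  have hPinv := P.invertibleOfIsUnitDet hP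
  have hQinv := Q.invertibleOfIsUnitDet hQ
  -- P as linear equiv
  let eP : (Fin s → R) ≃ₗ[R] (Fin s → R) :=
    LinearEquiv.ofLinear P.mulVecLin (⅟P).mulVecLin
      (by rw [← Matrix.mulVecLin_mul, mul_invOf_self, Matrix.mulVecLin_one])
      (by rw [← Matrix.mulVecLin_mul, invOf_mul_self, Matrix.mulVecLin_one])
  have hrange : (LinearMap.range M.mulVecLin).map (eP : (Fin s → R) →ₗ[R] (Fin s → R))
      = LinearMap.range (P * M * Q).mulVecLin := by
    have hQsurj : Function.Surjective Q.mulVecLin := by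
      intro y
      refine ⟨(⅟Q).mulVecLin y, ?_⟩
      have h2 : Q.mulVecLin ((⅟Q).mulVecLin y) = (Q * ⅟Q).mulVecLin y := by
        rw [Matrix.mulVecLin_mul]; rfl
      rw [h2, mul_invOf_self, Matrix.mulVecLin_one]; rfl
    have h1 : (P * M * Q).mulVecLin = P.mulVecLin ∘ₗ (M.mulVecLin ∘ₗ Q.mulVecLin) := by
      rw [Matrix.mulVecLin_mul, Matrix.mulVecLin_mul, LinearMap.comp_assoc]
    rw [h1, LinearMap.range_comp, LinearMap.range_comp_of_range_eq_top _ (LinearMap.range_eq_top.mpr hQsurj)]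
    rfl
  exact ⟨(Submodule.Quotient.equiv _ _ eP hrange).symm⟩

lemma exists_PQ_submatrix {s : ℕ} (M : Matrix (Fin s) (Fin s) R) (σ τ : Equiv.Perm (Fin s)) :
    ∃ P Q : Matrix (Fin s) (Fin s) R, IsUnit P.det ∧ IsUnit Q.det ∧
      P * M * Q = M.submatrix σ τ := by
  have key : ∀ (ρ : Equiv.Perm (Fin s)),
      (1 : Matrix (Fin s) (Fin s) R).submatrix ρ _root_.id
        * (1 : Matrix (Fin s) (Fin s) R).submatrix _root_.id ρ = 1 := by
    intro ρ
    have := Matrix.submatrix_mul_equiv (1 : Matrix (Fin s) (Fin s) R)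
      (1 : Matrix (Fin s) (Fin s) R) (⇑ρ) (Equiv.refl (Fin s)) (⇑ρ)
    simp only [Equiv.coe_refl, one_mul] at this
    calc (1 : Matrix (Fin s) (Fin s) R).submatrix ρ _root_.id
          * (1 : Matrix (Fin s) (Fin s) R).submatrix _root_.id ρ
        = (1 : Matrix (Fin s) (Fin s) R).submatrix ρ (⇑(Equiv.refl (Fin s)))
          * (1 : Matrix (Fin s) (Fin s) R).submatrix (⇑(Equiv.refl (Fin s))) ρ := rfl
      _ = (1 : Matrix (Fin s) (Fin s) R).submatrix ρ ρ := this
      _ = 1 := Matrix.submatrix_one_equiv ρ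
  have key2 : ∀ (ρ : Equiv.Perm (Fin s)),
      (1 : Matrix (Fin s) (Fin s) R).submatrix _root_.id ρ
        * (1 : Matrix (Fin s) (Fin s) R).submatrix ρ _root_.id = 1 := by
    intro ρ
    have := Matrix.submatrix_mul_equiv (1 : Matrix (Fin s) (Fin s) R)
      (1 : Matrix (Fin s) (Fin s) R) (_root_.id : Fin s → Fin s) ρ (_root_.id : Fin s → Fin s)
    simp only [one_mul] at this
    rw [this, Matrix.submatrix_id_id]
  refine ⟨(1 : Matrix (Fin s) (Fin s) R).submatrix σ _root_.id,
    (1 : Matrix (Fin s) (Fin s) R).submatrix _root_.id τ, ?_, ?_, ?_⟩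
  · rw [← Matrix.isUnit_iff_isUnit_det]
    exact @isUnit_of_invertible _ _ _ ⟨_, key2 σ, key σ⟩
  · rw [← Matrix.isUnit_iff_isUnit_det]
    exact @isUnit_of_invertible _ _ _ ⟨_, key τ, key2 τ⟩
  · have h1 : (1 : Matrix (Fin s) (Fin s) R).submatrix σ _root_.id * M
        = M.submatrix σ _root_.id := by
      have := Matrix.submatrix_mul_equiv (1 : Matrix (Fin s) (Fin s) R) M
        (⇑σ) (Equiv.refl (Fin s)) (_root_.id : Fin s → Fin s)
      simpa using this
    have h2 : M.submatrix σ _root_.id * (1 : Matrix (Fin s) (Fin s) R).submatrix _root_.id τ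
        = M.submatrix σ τ := by
      have := Matrix.submatrix_mul_equiv M (1 : Matrix (Fin s) (Fin s) R)
        (⇑σ) (Equiv.refl (Fin s)) (⇑τ)
      simpa using this
    rw [h1, h2]

lemma elim_block {n : ℕ} (M : Matrix (Fin (n+1)) (Fin (n+1)) R) (h : IsUnit (M 0 0)) :
    ∃ L U : Matrix (Fin (n+1)) (Fin (n+1)) R, IsUnit L.det ∧ IsUnit U.det ∧
      (L * M * U) 0 0 = M 0 0 ∧ (∀ i, i ≠ 0 → (L * M * U) i 0 = 0) ∧
      (∀ j, j ≠ 0 → (L * M * U) 0 j = 0) := by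
  obtain ⟨u, hu⟩ := h
  set NL : Matrix (Fin (n+1)) (Fin (n+1)) R :=
    fun i j => if j = 0 ∧ i ≠ 0 then -(M i 0 * (↑u⁻¹ : R)) else 0 with hNL
  set NU : Matrix (Fin (n+1)) (Fin (n+1)) R :=
    fun i j => if i = 0 ∧ j ≠ 0 then -((↑u⁻¹ : R) * M 0 j) else 0 with hNU
  have hNL2 : NL * NL = 0 := by
    ext i j
    simp only [Matrix.mul_apply, Matrix.zero_apply]
    apply Finset.sum_eq_zero
    intro k _
    by_cases hk : k = 0
    · subst hk; simp [hNL]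
    · simp [hNL, hk]
  have hNU2 : NU * NU = 0 := by
    ext i j
    simp only [Matrix.mul_apply, Matrix.zero_apply]
    apply Finset.sum_eq_zero
    intro k _
    by_cases hk : k = 0
    · subst hk; simp [hNU]
    · simp [hNU, hk]
  have hLinv : (1 + NL) * (1 - NL) = 1 := by
    have h2 : (1 + NL) * (1 - NL) = 1 - NL * NL := by noncomm_ring
    rw [h2, hNL2, sub_zero]
  have hLinv' : (1 - NL) * (1 + NL) = 1 := by
    have h2 : (1 - NL) * (1 + NL) = 1 - NL * NL := by noncomm_ring
    rw [h2, hNL2, sub_zero]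
  have hUinv : (1 + NU) * (1 - NU) = 1 := by
    have h2 : (1 + NU) * (1 - NU) = 1 - NU * NU := by noncomm_ring
    rw [h2, hNU2, sub_zero]
  have hUinv' : (1 - NU) * (1 + NU) = 1 := by
    have h2 : (1 - NU) * (1 + NU) = 1 - NU * NU := by noncomm_ring
    rw [h2, hNU2, sub_zero]
  have hLM : ∀ i j, ((1 + NL) * M) i j = M i j + NL i 0 * M 0 j := by
    intro i j
    rw [Matrix.add_mul, Matrix.one_mul, Matrix.add_apply]
    congr 1
    rw [Matrix.mul_apply, Finset.sum_eq_single 0 (fun k _ hk => by simp [hNL, hk]) (by simp)]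
  have hfull : ∀ i j, ((1 + NL) * M * (1 + NU)) i j
      = (M i j + NL i 0 * M 0 j) + (M i 0 + NL i 0 * M 0 0) * NU 0 j := by
    intro i j
    rw [Matrix.mul_add, Matrix.mul_one, Matrix.add_apply, hLM i j]
    congr 1
    rw [Matrix.mul_apply, Finset.sum_eq_single 0
      (fun k _ hk => by
        have h2 : NU k j = 0 := by simp [hNU, hk]
        rw [h2, mul_zero])
      (by simp), hLM i 0]
  have huu : (↑u : R) * ↑u⁻¹ = 1 := u.mul_inv
  refine ⟨1 + NL, 1 + NU, ?_, ?_, ?_, ?_, ?_⟩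
  · rw [← Matrix.isUnit_iff_isUnit_det]
    exact @isUnit_of_invertible _ _ _ ⟨_, hLinv', hLinv⟩
  · rw [← Matrix.isUnit_iff_isUnit_det]
    exact @isUnit_of_invertible _ _ _ ⟨_, hUinv', hUinv⟩
  · rw [hfull]; simp [hNL, hNU]
  · intro i hi
    rw [hfull]
    have h1 : NL i 0 = -(M i 0 * (↑u⁻¹ : R)) := by simp [hNL, hi]
    have h2 : NU 0 0 = 0 := by simp [hNU]
    rw [h1, h2, mul_zero, add_zero, ← hu]
    linear_combination (-(M i 0)) * huu
  · intro j hj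
    rw [hfull]
    have h1 : NL 0 0 = 0 := by simp [hNL]
    have h2 : NU 0 j = -((↑u⁻¹ : R) * M 0 j) := by simp [hNU, hj]
    rw [h1, h2, zero_mul, add_zero, zero_mul, add_zero, ← hu]
    linear_combination (-(M 0 j)) * huu

lemma det_block {n : ℕ} (B : Matrix (Fin (n+1)) (Fin (n+1)) R)
    (hrow : ∀ j, j ≠ 0 → B 0 j = 0) :
    B.det = B 0 0 * (B.submatrix Fin.succ Fin.succ).det := by
  rw [Matrix.det_succ_row_zero]
  rw [Finset.sum_eq_single 0
    (fun j _ hj => by rw [hrow j hj]; ring) (by simp)]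
  simp [Fin.succAbove_zero]

lemma coker_block {n : ℕ} (B : Matrix (Fin (n+1)) (Fin (n+1)) R) (h00 : IsUnit (B 0 0))
    (hcol : ∀ i, i ≠ 0 → B i 0 = 0) (hrow : ∀ j, j ≠ 0 → B 0 j = 0) :
    Nonempty (mcoker B ≃ₗ[R] mcoker (B.submatrix Fin.succ Fin.succ)) := by
  obtain ⟨u, hu⟩ := h00
  set M₁ := B.submatrix Fin.succ Fin.succ with hM₁
  set ρ : (Fin (n+1) → R) →ₗ[R] (Fin n → R) := LinearMap.funLeft R R Fin.succ with hρ
  have hcomm : ∀ v : Fin (n+1) → R, ρ (B.mulVec v) = M₁.mulVec (v ∘ Fin.succ) := by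
    intro v
    funext i
    show (B.mulVec v) (Fin.succ i) = _
    rw [Matrix.mulVec, dotProduct, Fin.sum_univ_succ]
    rw [hcol (Fin.succ i) (Fin.succ_ne_zero i), zero_mul, zero_add]
    rfl
  have hle : LinearMap.range B.mulVecLin ≤ LinearMap.ker
      ((LinearMap.range M₁.mulVecLin).mkQ ∘ₗ ρ) := by
    rintro x ⟨v, rfl⟩
    simp only [LinearMap.mem_ker, LinearMap.comp_apply]
    rw [show B.mulVecLin v = B.mulVec v from rfl, hcomm v]
    rw [Submodule.mkQ_apply, Submodule.Quotient.mk_eq_zero]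
    exact ⟨v ∘ Fin.succ, rfl⟩
  set δ : mcoker B →ₗ[R] mcoker M₁ :=
    Submodule.liftQ _ _ hle with hδ
  have hsurj : Function.Surjective δ := by
    intro y
    obtain ⟨w, rfl⟩ := Submodule.Quotient.mk_surjective _ y
    refine ⟨Submodule.Quotient.mk (Fin.cases 0 w), ?_⟩
    have : δ (Submodule.Quotient.mk (Fin.cases 0 w))
        = Submodule.Quotient.mk (ρ (Fin.cases 0 w)) := rfl
    rw [this]
    have h4 : ρ (Fin.cases 0 w) = w := by
      funext i
      show (Fin.cases 0 w : Fin (n+1) → R) (Fin.succ i) = w i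
      simp
    rw [h4]
  have hinj : Function.Injective δ := by
    rw [injective_iff_map_eq_zero]
    intro z hz
    obtain ⟨x, rfl⟩ := Submodule.Quotient.mk_surjective _ z
    have hx : Submodule.Quotient.mk (ρ x) = (0 : mcoker M₁) := hz
    rw [Submodule.Quotient.mk_eq_zero] at hx
    obtain ⟨y, hy⟩ := hx
    rw [Submodule.Quotient.mk_eq_zero]
    refine ⟨Fin.cases ((↑u⁻¹ : R) * x 0) y, ?_⟩
    show B.mulVec _ = x
    funext i
    rcases Fin.eq_zero_or_eq_succ i with rfl | ⟨i', rfl⟩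
    · rw [Matrix.mulVec, dotProduct, Fin.sum_univ_succ]
      have h2 : ∀ j : Fin n, B 0 (Fin.succ j) * (Fin.cases ((↑u⁻¹ : R) * x 0) y : Fin (n+1) → R) (Fin.succ j) = 0 := by
        intro j
        rw [hrow _ (Fin.succ_ne_zero j), zero_mul]
      rw [Finset.sum_eq_zero (fun j _ => h2 j), add_zero]
      show B 0 0 * ((↑u⁻¹ : R) * x 0) = x 0
      rw [← hu, ← mul_assoc, u.mul_inv, one_mul]
    · have h3' : M₁.mulVec y = ρ x := hy
      have h3 : (M₁.mulVec y) i' = x (Fin.succ i') := by rw [h3']; rfl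
      rw [Matrix.mulVec, dotProduct, Fin.sum_univ_succ]
      rw [hcol _ (Fin.succ_ne_zero i'), zero_mul, zero_add]
      rw [← h3]
      rfl
  exact ⟨LinearEquiv.ofBijective δ ⟨hinj, hsurj⟩⟩

lemma pivot_reduce {n : ℕ} (M : Matrix (Fin (n+1)) (Fin (n+1)) R) (i₀ j₀ : Fin (n+1))
    (h : IsUnit (M i₀ j₀)) :
    ∃ (M₁ : Matrix (Fin n) (Fin n) R) (u : Rˣ), M.det = u * M₁.det ∧
      Nonempty (mcoker M ≃ₗ[R] mcoker M₁) := by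
  set σ := Equiv.swap (0 : Fin (n+1)) i₀
  set τ := Equiv.swap (0 : Fin (n+1)) j₀
  set M' := M.submatrix σ τ with hM'
  obtain ⟨P, Q, hP, hQ, hPQ⟩ := exists_PQ_submatrix M σ τ
  have hM'00 : M' 0 0 = M i₀ j₀ := by
    simp [hM', Matrix.submatrix_apply, σ, τ, Equiv.swap_apply_left]
  have h' : IsUnit (M' 0 0) := hM'00 ▸ h
  obtain ⟨L, U, hL, hU, hB00, hBcol, hBrow⟩ := elim_block M' h'
  set B := L * M' * U with hB
  have hdetB : B.det = L.det * (P.det * M.det * Q.det) * U.det := by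
    rw [hB, Matrix.det_mul, Matrix.det_mul, hM', ← hPQ, Matrix.det_mul, Matrix.det_mul]
  set M₁ := B.submatrix Fin.succ Fin.succ with hM₁
  have hdetB2 : B.det = M i₀ j₀ * M₁.det := by
    rw [det_block B hBrow, hB00, hM'00]
  have e1 : (L.det * P.det * Q.det * U.det) * M.det = M i₀ j₀ * M₁.det := by
    rw [← hdetB2, hdetB]; ring
  set w : Rˣ := hL.unit * hP.unit * hQ.unit * hU.unit with hw
  have hwval : (↑w : R) = L.det * P.det * Q.det * U.det := by
    simp [hw, IsUnit.unit_spec]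
  refine ⟨M₁, w⁻¹ * h.unit, ?_, ?_⟩
  · have e2 : M.det = (↑w⁻¹ : R) * (M i₀ j₀ * M₁.det) := by
      rw [← e1, ← hwval, ← mul_assoc, Units.inv_mul, one_mul]
    have e3 : (↑(w⁻¹ * h.unit) : R) * M₁.det = ↑w⁻¹ * (M i₀ j₀ * M₁.det) := by
      push_cast [h.unit_spec]
      ring
    exact e2.trans e3.symm
  · have c1 : Nonempty (mcoker M' ≃ₗ[R] mcoker M) := by
      rw [hM', ← hPQ]; exact coker_PMQ P M Q hP hQ
    have c2 : Nonempty (mcoker B ≃ₗ[R] mcoker M') := coker_PMQ L M' U hL hU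
    have c3 : Nonempty (mcoker B ≃ₗ[R] mcoker M₁) :=
      coker_block B (hB00 ▸ h') hBcol hBrow
    obtain ⟨f1⟩ := c1; obtain ⟨f2⟩ := c2; obtain ⟨f3⟩ := c3
    exact ⟨(f2.trans f1).symm.trans f3⟩

lemma key_nonunit [IsLocalRing R] {a b : ℕ} (M : Matrix (Fin a) (Fin a) R)
    (N : Matrix (Fin b) (Fin b) R)
    (hM : ∀ i j, ¬ IsUnit (M i j)) (hN : ∀ i j, ¬ IsUnit (N i j))
    (Φ : mcoker M ≃ₗ[R] mcoker N) : ∃ u : Rˣ, M.det = u * N.det := by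
  classical
  set mm := IsLocalRing.maximalIdeal R with hmm
  have hMm : ∀ i j, M i j ∈ mm := fun i j => hM i j
  have hNm : ∀ i j, N i j ∈ mm := fun i j => hN i j
  -- lift Φ
  have hPex : ∀ i : Fin a, ∃ v : Fin b → R,
      (Submodule.Quotient.mk v : mcoker N) = Φ (Submodule.Quotient.mk (Pi.single i 1)) :=
    fun i => Submodule.Quotient.mk_surjective _ _
  choose p hp using hPex
  set P : Matrix (Fin b) (Fin a) R := fun r i => p i r with hPdef
  have hPcol : ∀ i, P.mulVec (Pi.single i 1) = p i := by
    intro i; rw [Matrix.mulVec_single_one]; rfl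
  have hPmk : ∀ x : Fin a → R,
      (Submodule.Quotient.mk (P.mulVec x) : mcoker N) = Φ (Submodule.Quotient.mk x) := by
    have : ((LinearMap.range N.mulVecLin).mkQ.comp P.mulVecLin : (Fin a → R) →ₗ[R] mcoker N)
        = (Φ : mcoker M →ₗ[R] mcoker N).comp (LinearMap.range M.mulVecLin).mkQ :=
      Module.Basis.ext (Pi.basisFun R (Fin a)) (fun i => by
        simp only [Pi.basisFun_apply, LinearMap.comp_apply, Matrix.mulVecLin_apply,
          Submodule.mkQ_apply, LinearEquiv.coe_coe]
        rw [hPcol i, hp i])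
    intro x
    exact LinearMap.congr_fun this x
  have hQex : ∀ i : Fin b, ∃ v : Fin a → R,
      (Submodule.Quotient.mk v : mcoker M) = Φ.symm (Submodule.Quotient.mk (Pi.single i 1)) :=
    fun i => Submodule.Quotient.mk_surjective _ _
  choose q hq using hQex
  set Q : Matrix (Fin a) (Fin b) R := fun r i => q i r with hQdef
  have hQcol : ∀ i, Q.mulVec (Pi.single i 1) = q i := by
    intro i; rw [Matrix.mulVec_single_one]; rfl
  have hQmk : ∀ y : Fin b → R,
      (Submodule.Quotient.mk (Q.mulVec y) : mcoker M) = Φ.symm (Submodule.Quotient.mk y) := by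
    have : ((LinearMap.range M.mulVecLin).mkQ.comp Q.mulVecLin : (Fin b → R) →ₗ[R] mcoker M)
        = (Φ.symm : mcoker N →ₗ[R] mcoker M).comp (LinearMap.range N.mulVecLin).mkQ :=
      Module.Basis.ext (Pi.basisFun R (Fin b)) (fun i => by
        simp only [Pi.basisFun_apply, LinearMap.comp_apply, Matrix.mulVecLin_apply,
          Submodule.mkQ_apply, LinearEquiv.coe_coe]
        rw [hQcol i, hq i])
    intro y
    exact LinearMap.congr_fun this y
  -- Q * P = 1 + M * Umat
  have hQPex : ∀ i : Fin a, ∃ w : Fin a → R,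
      (Q * P).mulVec (Pi.single i 1) - Pi.single i 1 = M.mulVec w := by
    intro i
    have h1 : (Submodule.Quotient.mk ((Q * P).mulVec (Pi.single i 1)) : mcoker M)
        = Submodule.Quotient.mk (Pi.single i 1) := by
      rw [← Matrix.mulVec_mulVec, hQmk, hPmk, LinearEquiv.symm_apply_apply]
    rw [Submodule.Quotient.eq] at h1
    obtain ⟨w, hw⟩ := h1
    exact ⟨w, hw.symm⟩
  choose uvec huvec using hQPex
  set Umat : Matrix (Fin a) (Fin a) R := fun r i => uvec i r with hUdef
  have hQP : Q * P = 1 + M * Umat := by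
    ext r i
    have := congrFun (huvec i) r
    rw [Pi.sub_apply] at this
    have h2 : ((Q * P).mulVec (Pi.single i 1)) r = (Q * P) r i := by
      rw [Matrix.mulVec_single_one]; rfl
    have h3 : (Pi.single i (1:R) : Fin a → R) r = (1 : Matrix (Fin a) (Fin a) R) r i := by
      rw [Matrix.one_apply, Pi.single_apply]
    have h4 : (M.mulVec (uvec i)) r = (M * Umat) r i := by
      simp only [Matrix.mulVec, dotProduct, Matrix.mul_apply, hUdef]
      rfl
    rw [h2, h3, h4] at this
    rw [Matrix.add_apply]
    linear_combination this
  -- P * Q = 1 + N * Vmat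
  have hPQex : ∀ i : Fin b, ∃ w : Fin b → R,
      (P * Q).mulVec (Pi.single i 1) - Pi.single i 1 = N.mulVec w := by
    intro i
    have h1 : (Submodule.Quotient.mk ((P * Q).mulVec (Pi.single i 1)) : mcoker N)
        = Submodule.Quotient.mk (Pi.single i 1) := by
      rw [← Matrix.mulVec_mulVec, hPmk, hQmk, LinearEquiv.apply_symm_apply]
    rw [Submodule.Quotient.eq] at h1
    obtain ⟨w, hw⟩ := h1
    exact ⟨w, hw.symm⟩
  choose vvec hvvec using hPQex
  set Vmat : Matrix (Fin b) (Fin b) R := fun r i => vvec i r with hVdef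
  have hPQ : P * Q = 1 + N * Vmat := by
    ext r i
    have := congrFun (hvvec i) r
    rw [Pi.sub_apply] at this
    have h2 : ((P * Q).mulVec (Pi.single i 1)) r = (P * Q) r i := by
      rw [Matrix.mulVec_single_one]; rfl
    have h3 : (Pi.single i (1:R) : Fin b → R) r = (1 : Matrix (Fin b) (Fin b) R) r i := by
      rw [Matrix.one_apply, Pi.single_apply]
    have h4 : (N.mulVec (vvec i)) r = (N * Vmat) r i := by
      simp only [Matrix.mulVec, dotProduct, Matrix.mul_apply, hVdef]
      rfl
    rw [h2, h3, h4] at this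
    rw [Matrix.add_apply]
    linear_combination this
  -- determinants of QP, PQ are units
  have unit_of_one_add : ∀ {s : ℕ} (W : Matrix (Fin s) (Fin s) R) (C : Matrix (Fin s) (Fin s) R),
      (∀ i j, C i j ∈ mm) → W = 1 + C → IsUnit W.det := by
    intro s W C hC hW
    by_contra hcon
    have hdet : W.det ∈ mm := hcon
    have h0 : IsLocalRing.residue R W.det = 0 := Ideal.Quotient.eq_zero_iff_mem.mpr hdet
    have h1 : IsLocalRing.residue R W.det = 1 := by
      have hmap : W.map (IsLocalRing.residue R) = 1 := by
        rw [hW]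
        ext r c
        simp only [Matrix.map_apply, Matrix.add_apply]
        rw [map_add]
        have hc0 : IsLocalRing.residue R (C r c) = 0 :=
          Ideal.Quotient.eq_zero_iff_mem.mpr (hC r c)
        rw [hc0, add_zero]
        by_cases h : r = c
        · subst h; simp [Matrix.one_apply]
        · simp [Matrix.one_apply, h]
      rw [RingHom.map_det, RingHom.mapMatrix_apply, hmap, Matrix.det_one]
    rw [h0] at h1
    exact zero_ne_one h1
  have hmulmem : ∀ {s t u' : ℕ} (A : Matrix (Fin s) (Fin t) R) (B : Matrix (Fin t) (Fin u') R),
      (∀ i j, A i j ∈ mm) → ∀ i j, (A * B) i j ∈ mm := by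
    intro s t u' A B hA i j
    rw [Matrix.mul_apply]
    exact Ideal.sum_mem _ (fun k _ => Ideal.mul_mem_right _ _ (hA i k))
  have hQPdet : IsUnit (Q * P).det := unit_of_one_add _ _ (hmulmem M Umat hMm) hQP
  have hPQdet : IsUnit (P * Q).det := unit_of_one_add _ _ (hmulmem N Vmat hNm) hPQ
  -- a = b
  have hQPbij : Function.Bijective (Q * P).mulVecLin := by
    have hinv := (Q * P).invertibleOfIsUnitDet hQPdet
    let eqv : (Fin a → R) ≃ₗ[R] (Fin a → R) :=
      LinearEquiv.ofLinear (Q * P).mulVecLin (⅟(Q * P)).mulVecLin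
        (by rw [← Matrix.mulVecLin_mul, mul_invOf_self, Matrix.mulVecLin_one])
        (by rw [← Matrix.mulVecLin_mul, invOf_mul_self, Matrix.mulVecLin_one])
    exact eqv.bijective
  have hPQbij : Function.Bijective (P * Q).mulVecLin := by
    have hinv := (P * Q).invertibleOfIsUnitDet hPQdet
    let eqv : (Fin b → R) ≃ₗ[R] (Fin b → R) :=
      LinearEquiv.ofLinear (P * Q).mulVecLin (⅟(P * Q)).mulVecLin
        (by rw [← Matrix.mulVecLin_mul, mul_invOf_self, Matrix.mulVecLin_one])
        (by rw [← Matrix.mulVecLin_mul, invOf_mul_self, Matrix.mulVecLin_one])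
    exact eqv.bijective
  have hPbij : Function.Bijective P.mulVecLin := by
    constructor
    · intro x y hxy
      apply hQPbij.1
      rw [Matrix.mulVecLin_mul]
      exact congrArg Q.mulVecLin hxy
    · intro y
      obtain ⟨z, hz⟩ := hPQbij.2 y
      refine ⟨Q.mulVecLin z, ?_⟩
      rw [← hz, Matrix.mulVecLin_mul]
      rfl
  have hab : a = b := by
    have eqv := LinearEquiv.ofBijective P.mulVecLin hPbij
    have h6 := eqv.finrank_eq
    rwa [Module.finrank_fin_fun, Module.finrank_fin_fun] at h6
  subst hab
  -- now everything is square
  have hdetP : IsUnit P.det := by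
    rw [Matrix.det_mul] at hQPdet
    exact isUnit_of_mul_isUnit_right hQPdet
  have hdetQ : IsUnit Q.det := by
    rw [Matrix.det_mul] at hPQdet
    exact isUnit_of_mul_isUnit_right hPQdet
  -- P * M = N * S
  have hPMex : ∀ i : Fin a, ∃ w : Fin a → R,
      (P * M).mulVec (Pi.single i 1) = N.mulVec w := by
    intro i
    have h1 : (Submodule.Quotient.mk ((P * M).mulVec (Pi.single i 1)) : mcoker N) = 0 := by
      rw [← Matrix.mulVec_mulVec, hPmk]
      have h2 : (Submodule.Quotient.mk (M.mulVec (Pi.single i 1)) : mcoker M) = 0 := by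
        rw [Submodule.Quotient.mk_eq_zero]
        exact ⟨Pi.single i 1, rfl⟩
      rw [h2, map_zero]
    rw [Submodule.Quotient.mk_eq_zero] at h1
    obtain ⟨w, hw⟩ := h1
    exact ⟨w, hw.symm⟩
  choose svec hsvec using hPMex
  set Smat : Matrix (Fin a) (Fin a) R := fun r i => svec i r with hSdef
  have hPM : P * M = N * Smat := by
    ext r i
    have := congrFun (hsvec i) r
    have h2 : ((P * M).mulVec (Pi.single i 1)) r = (P * M) r i := by
      rw [Matrix.mulVec_single_one]; rfl
    have h4 : (N.mulVec (svec i)) r = (N * Smat) r i := by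
      simp only [Matrix.mulVec, dotProduct, Matrix.mul_apply, hSdef]
      rfl
    rw [h2, h4] at this
    exact this
  -- Q * N = M * T
  have hQNex : ∀ i : Fin a, ∃ w : Fin a → R,
      (Q * N).mulVec (Pi.single i 1) = M.mulVec w := by
    intro i
    have h1 : (Submodule.Quotient.mk ((Q * N).mulVec (Pi.single i 1)) : mcoker M) = 0 := by
      rw [← Matrix.mulVec_mulVec, hQmk]
      have h2 : (Submodule.Quotient.mk (N.mulVec (Pi.single i 1)) : mcoker N) = 0 := by
        rw [Submodule.Quotient.mk_eq_zero]
        exact ⟨Pi.single i 1, rfl⟩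
      rw [h2, map_zero]
    rw [Submodule.Quotient.mk_eq_zero] at h1
    obtain ⟨w, hw⟩ := h1
    exact ⟨w, hw.symm⟩
  choose tvec htvec using hQNex
  set Tmat : Matrix (Fin a) (Fin a) R := fun r i => tvec i r with hTdef
  have hQN : Q * N = M * Tmat := by
    ext r i
    have := congrFun (htvec i) r
    have h2 : ((Q * N).mulVec (Pi.single i 1)) r = (Q * N) r i := by
      rw [Matrix.mulVec_single_one]; rfl
    have h4 : (M.mulVec (tvec i)) r = (M * Tmat) r i := by
      simp only [Matrix.mulVec, dotProduct, Matrix.mul_apply, hTdef]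
      rfl
    rw [h2, h4] at this
    exact this
  -- conclude
  have e1 : P.det * M.det = N.det * Smat.det := by
    rw [← Matrix.det_mul, ← Matrix.det_mul, hPM]
  have e2 : Q.det * N.det = M.det * Tmat.det := by
    rw [← Matrix.det_mul, ← Matrix.det_mul, hQN]
  have hx : M.det = ((↑hdetP.unit⁻¹ : R) * Smat.det) * N.det := by
    have := congrArg (fun t => (↑hdetP.unit⁻¹ : R) * t) e1
    rw [← mul_assoc, ← mul_assoc] at this
    have h7 : (↑hdetP.unit⁻¹ : R) * P.det = 1 := by
      have h8 := hdetP.unit.inv_mul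
      rwa [IsUnit.unit_spec] at h8
    rw [h7, one_mul] at this
    rw [this]; ring
  have hy : N.det = ((↑hdetQ.unit⁻¹ : R) * Tmat.det) * M.det := by
    have := congrArg (fun t => (↑hdetQ.unit⁻¹ : R) * t) e2
    rw [← mul_assoc, ← mul_assoc] at this
    have h7 : (↑hdetQ.unit⁻¹ : R) * Q.det = 1 := by
      have h8 := hdetQ.unit.inv_mul
      rwa [IsUnit.unit_spec] at h8
    rw [h7, one_mul] at this
    rw [this]; ring
  exact assoc_of_mutual hx hy

lemma key_det [IsLocalRing R] :
    ∀ (s : ℕ) {a b : ℕ}, a + b ≤ s →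
      ∀ (M : Matrix (Fin a) (Fin a) R) (N : Matrix (Fin b) (Fin b) R),
        (Nonempty (mcoker M ≃ₗ[R] mcoker N)) → ∃ u : Rˣ, M.det = u * N.det := by
  intro s
  induction s with
  | zero =>
    intro a b hab M N ⟨Φ⟩
    obtain ⟨rfl, rfl⟩ : a = 0 ∧ b = 0 := by omega
    exact ⟨1, by simp [Matrix.det_fin_zero]⟩
  | succ s ih =>
    intro a b hab M N hΦ
    obtain ⟨Φ⟩ := hΦ
    by_cases hM : ∃ i j, IsUnit (M i j)
    · obtain ⟨i, j, hij⟩ := hM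
      match a, M, i, j, hij, Φ, hab with
      | (n+1), M, i, j, hij, Φ, hab =>
        obtain ⟨M₁, u₀, hdet, ⟨ψ⟩⟩ := pivot_reduce M i j hij
        obtain ⟨u, hu⟩ := ih (by omega) M₁ N ⟨ψ.symm.trans Φ⟩
        exact ⟨u₀ * u, by rw [hdet, hu, Units.val_mul]; ring⟩
    · by_cases hN : ∃ i j, IsUnit (N i j)
      · obtain ⟨i, j, hij⟩ := hN
        match b, N, i, j, hij, Φ, hab with
        | (n+1), N, i, j, hij, Φ, hab =>
          obtain ⟨N₁, u₀, hdet, ⟨ψ⟩⟩ := pivot_reduce N i j hij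
          obtain ⟨u, hu⟩ := ih (by omega) M N₁ ⟨Φ.trans ψ⟩
          refine ⟨u * u₀⁻¹, ?_⟩
          have h9 : (↑u₀⁻¹ : R) * N.det = N₁.det := by
            rw [hdet, ← mul_assoc, Units.inv_mul, one_mul]
          rw [hu, ← h9, Units.val_mul]
          ring
      · push_neg at hM
        push_neg at hN
        exact key_nonunit M N hM hN Φ

/-- Main determinant-comparison lemma over a local ring. -/
lemma det_toMatrix_unit_of_coker_equiv [IsLocalRing R] {a b : ℕ}
    {V₁ V₂ W₁ W₂ : Type*}
    [AddCommGroup V₁] [Module R V₁] [AddCommGroup V₂] [Module R V₂]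
    [AddCommGroup W₁] [Module R W₁] [AddCommGroup W₂] [Module R W₂]
    (bV₁ : Module.Basis (Fin a) R V₁) (bV₂ : Module.Basis (Fin a) R V₂)
    (bW₁ : Module.Basis (Fin b) R W₁) (bW₂ : Module.Basis (Fin b) R W₂)
    (f : V₁ →ₗ[R] V₂) (g : W₁ →ₗ[R] W₂)
    (Φ : (V₂ ⧸ LinearMap.range f) ≃ₗ[R] (W₂ ⧸ LinearMap.range g)) :
    ∃ u : Rˣ, (LinearMap.toMatrix bV₁ bV₂ f).det = u * (LinearMap.toMatrix bW₁ bW₂ g).det := by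
  classical
  set M := LinearMap.toMatrix bV₁ bV₂ f with hM
  set N := LinearMap.toMatrix bW₁ bW₂ g with hN
  have hMf : ∀ x : V₁, M.mulVec (bV₁.repr x) = ⇑(bV₂.repr (f x)) := by
    intro x
    exact LinearMap.toMatrix_mulVec_repr bV₁ bV₂ f x
  have hNg : ∀ x : W₁, N.mulVec (bW₁.repr x) = ⇑(bW₂.repr (g x)) := by
    intro x
    exact LinearMap.toMatrix_mulVec_repr bW₁ bW₂ g x
  have hmapV : (LinearMap.range f).map (bV₂.equivFun : V₂ →ₗ[R] (Fin a → R))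
      = LinearMap.range M.mulVecLin := by
    apply le_antisymm
    · rintro y ⟨v, ⟨x, rfl⟩, rfl⟩
      exact ⟨bV₁.repr x, by simp [Matrix.mulVecLin_apply, hMf x, Module.Basis.equivFun_apply]⟩
    · rintro y ⟨w, rfl⟩
      refine ⟨f (bV₁.equivFun.symm w), ⟨_, rfl⟩, ?_⟩
      have h1 : ⇑(bV₁.repr (bV₁.equivFun.symm w)) = w := by
        have h2 := bV₁.equivFun.apply_symm_apply w
        rw [Module.Basis.equivFun_apply] at h2
        exact h2
      simp only [Matrix.mulVecLin_apply, LinearEquiv.coe_coe, Module.Basis.equivFun_apply]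
      rw [← hMf (bV₁.equivFun.symm w), h1]
  have hmapW : (LinearMap.range g).map (bW₂.equivFun : W₂ →ₗ[R] (Fin b → R))
      = LinearMap.range N.mulVecLin := by
    apply le_antisymm
    · rintro y ⟨v, ⟨x, rfl⟩, rfl⟩
      exact ⟨bW₁.repr x, by simp [Matrix.mulVecLin_apply, hNg x, Module.Basis.equivFun_apply]⟩
    · rintro y ⟨w, rfl⟩
      refine ⟨g (bW₁.equivFun.symm w), ⟨_, rfl⟩, ?_⟩
      have h1 : ⇑(bW₁.repr (bW₁.equivFun.symm w)) = w := by
        have h2 := bW₁.equivFun.apply_symm_apply w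
        rw [Module.Basis.equivFun_apply] at h2
        exact h2
      simp only [Matrix.mulVecLin_apply, LinearEquiv.coe_coe, Module.Basis.equivFun_apply]
      rw [← hNg (bW₁.equivFun.symm w), h1]
  have ΨV : (V₂ ⧸ LinearMap.range f) ≃ₗ[R] mcoker M :=
    Submodule.Quotient.equiv (LinearMap.range f) (LinearMap.range M.mulVecLin)
      bV₂.equivFun hmapV
  have ΨW : (W₂ ⧸ LinearMap.range g) ≃ₗ[R] mcoker N :=
    Submodule.Quotient.equiv (LinearMap.range g) (LinearMap.range N.mulVecLin)
      bW₂.equivFun hmapW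
  exact key_det (a + b) le_rfl M N ⟨(ΨV.symm.trans Φ).trans ΨW⟩


end Part2

section Part1

variable (R : Type*) [CommRing R] (e : ℕ)

lemma piX_pow_e : (piX R e) ^ e = 0 := by
  rw [piX, ← map_pow, Ideal.Quotient.eq_zero_iff_mem]
  exact Ideal.subset_span rfl

lemma truncpoly_divide {m : ℕ} (hm : m ≤ e) (c : TruncPoly R e)
    (hc : (piX R e) ^ m * c = 0) : ∃ d : TruncPoly R e, c = (piX R e) ^ (e - m) * d := by
  obtain ⟨f, rfl⟩ := Ideal.Quotient.mk_surjective c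
  have h1 : (Ideal.Quotient.mk (Ideal.span {(Polynomial.X : Polynomial R) ^ e}))
      ((Polynomial.X : Polynomial R) ^ m * f) = 0 := by
    rw [map_mul, map_pow]
    exact hc
  rw [Ideal.Quotient.eq_zero_iff_mem, Ideal.mem_span_singleton] at h1
  obtain ⟨g, hg⟩ := h1
  have h2 : (Polynomial.X : Polynomial R) ^ m * f
      = (Polynomial.X : Polynomial R) ^ m * ((Polynomial.X : Polynomial R) ^ (e - m) * g) := by
    rw [hg, ← mul_assoc, ← pow_add]
    congr 2
    omega
  have h3 : f = (Polynomial.X : Polynomial R) ^ (e - m) * g :=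
    (Polynomial.monic_X_pow m).isRegular.left h2
  refine ⟨Ideal.Quotient.mk _ g, ?_⟩
  rw [h3, map_mul, map_pow]
  rfl

variable (E : Type*) [AddCommGroup E] [Module (TruncPoly R e) E] [Module R E]
    [IsScalarTower R (TruncPoly R e) E]

lemma module_divide [Module.Finite (TruncPoly R e) E] [Module.Free (TruncPoly R e) E]
    {m : ℕ} (hm : m ≤ e) (x : E) (hx : ((piX R e) ^ m : TruncPoly R e) • x = 0) :
    ∃ y : E, x = ((piX R e) ^ (e - m) : TruncPoly R e) • y := by
  classical
  set b := Module.Free.chooseBasis (TruncPoly R e) E with hb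
  have h1 : ∀ i, (piX R e) ^ m * (b.repr x i) = 0 := by
    intro i
    have h2 : b.repr (((piX R e) ^ m : TruncPoly R e) • x) = 0 := by rw [hx, map_zero]
    have h3 : ((piX R e) ^ m : TruncPoly R e) • b.repr x = 0 := by
      rw [← map_smul]; exact h2
    have h4 := DFunLike.congr_fun h3 i
    rwa [Finsupp.smul_apply, smul_eq_mul, Finsupp.zero_apply] at h4
  have h5 : ∀ i, ∃ d : TruncPoly R e, b.repr x i = (piX R e) ^ (e - m) * d :=
    fun i => truncpoly_divide R e hm _ (h1 i)
  choose d hd using h5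
  refine ⟨∑ i, d i • b i, ?_⟩
  rw [Finset.smul_sum]
  have h6 : ∀ i, ((piX R e) ^ (e - m) : TruncPoly R e) • (d i • b i) = (b.repr x i) • b i := by
    intro i
    rw [smul_smul, ← hd i]
  rw [Finset.sum_congr rfl (fun i _ => h6 i)]
  exact (b.sum_repr x).symm

variable {R e E}

lemma mulPi_apply (k : ℕ) (x : E) : mulPi R e E k x = ((piX R e) ^ k : TruncPoly R e) • x := rfl

lemma filt_killed {d₁ : ℕ} {F : ℕ → Submodule R E} (hF : IsPRFiltration R e E d₁ F) :
    ∀ m, m ≤ e → ∀ x ∈ F m, ((piX R e) ^ m : TruncPoly R e) • x = 0 := by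
  intro m
  induction m with
  | zero =>
    intro _ x hx
    rw [hF.1] at hx
    rw [Submodule.mem_bot] at hx
    rw [hx, smul_zero]
  | succ n ih =>
    intro hn x hx
    have h1 : piX R e • x ∈ F n := hF.2.2.2.2 n (by omega) x hx
    have h2 := ih (by omega) _ h1
    rw [pow_succ, mul_smul] at *
    exact h2

lemma filt_mono {d₁ : ℕ} {F : ℕ → Submodule R E} (hF : IsPRFiltration R e E d₁ F) :
    ∀ {i j : ℕ}, i ≤ j → j ≤ e → F i ≤ F j := by
  intro i j hij hje
  induction j with
  | zero =>
    have : i = 0 := by omega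
    subst this; exact le_rfl
  | succ n ih =>
    rcases Nat.lt_or_ge i (n+1) with h | h
    · exact le_trans (ih (by omega) (by omega)) (hF.2.1 n (by omega))
    · have : i = n+1 := by omega
      subst this; exact le_rfl

/-- Generic identification of the cokernel of the map induced by `π`
with an honest quotient. -/
lemma coker_iso_quot (X Y Z : Submodule R E)
    (ν : (↥Z ⧸ Y.comap Z.subtype) →ₗ[R] (↥Y ⧸ X.comap Y.subtype))
    (hν : ∀ (z : Z) (h : piX R e • (z : E) ∈ Y),
      ν (Submodule.Quotient.mk z) = Submodule.Quotient.mk (⟨piX R e • (z : E), h⟩ : Y))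
    (hπZ : ∀ z ∈ Z, piX R e • z ∈ Y) :
    Nonempty (((↥Y ⧸ X.comap Y.subtype) ⧸ LinearMap.range ν) ≃ₗ[R]
      (↥Y ⧸ (X ⊔ Z.map (mulPi R e E 1)).comap Y.subtype)) := by
  have hST : X.comap Y.subtype ≤ (X ⊔ Z.map (mulPi R e E 1)).comap Y.subtype :=
    fun y hy => Submodule.mem_sup_left hy
  have hrange : LinearMap.range ν
      = ((X ⊔ Z.map (mulPi R e E 1)).comap Y.subtype).map (X.comap Y.subtype).mkQ := by
    apply le_antisymm
    · rintro w ⟨c, rfl⟩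
      obtain ⟨z, rfl⟩ := Submodule.Quotient.mk_surjective _ c
      have hz : piX R e • (z : E) ∈ Y := hπZ z z.2
      rw [hν z hz]
      refine ⟨⟨piX R e • (z : E), hz⟩, ?_, rfl⟩
      refine Submodule.mem_sup_right ⟨(z : E), z.2, ?_⟩
      rw [mulPi_apply, pow_one]
      rfl
    · rintro w ⟨t, ht, rfl⟩
      rw [SetLike.mem_coe, Submodule.mem_comap, Submodule.mem_sup] at ht
      obtain ⟨x₁, hx₁, x₂, hx₂, hsum⟩ := ht
      obtain ⟨z, hz, rfl⟩ := hx₂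
      rw [mulPi_apply, pow_one] at hsum
      have hzY : piX R e • z ∈ Y := hπZ z hz
      refine ⟨Submodule.Quotient.mk (⟨z, hz⟩ : Z), ?_⟩
      rw [hν ⟨z, hz⟩ hzY, Submodule.mkQ_apply, Submodule.Quotient.eq]
      show (((⟨piX R e • z, hzY⟩ : Y) - t : Y) : E) ∈ X
      have h8 : (((⟨piX R e • z, hzY⟩ : Y) - t : Y) : E) = piX R e • z - (t : E) := rfl
      rw [h8]
      have hsum' : x₁ + piX R e • z = (t : E) := hsum
      have h9 : piX R e • z - (t : E) = -x₁ := by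
        rw [← hsum']; abel
      rw [h9]
      exact neg_mem hx₁
  rw [hrange]
  exact ⟨Submodule.quotientQuotientEquivQuotient _ _ hST⟩


lemma mem_PRext {F : ℕ → Submodule R E} {m : ℕ} {x : E} :
    x ∈ PRext R e E F m ↔ ((piX R e) ^ m : TruncPoly R e) • x ∈ F (e - m) := Iff.rfl

lemma psi_iso [Module.Finite (TruncPoly R e) E] [Module.Free (TruncPoly R e) E]
    {d₁ : ℕ} {F : ℕ → Submodule R E} (hF : IsPRFiltration R e E d₁ F)
    {j : ℕ} (hj1 : 2 ≤ j) (hje : j ≤ e) :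
    Nonempty ((↥(PRext R e E F (e+1-j)) ⧸
        ((PRext R e E F (e-j)) ⊔ (PRext R e E F (e+2-j)).map (mulPi R e E 1)).comap
          (PRext R e E F (e+1-j)).subtype) ≃ₗ[R]
      (↥(F (j-1)) ⧸ ((F (j-2)) ⊔ (F j).map (mulPi R e E 1)).comap (F (j-1)).subtype)) := by
  classical
  set π := piX R e with hπ
  have idx1 : e - (e + 1 - j) = j - 1 := by omega
  have idx2 : e - (e - j) = j := by omega
  have idx3 : e - (e + 2 - j) = j - 2 := by omega
  have idx4 : e - (j - 1) = e + 1 - j := by omega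
  have idx5 : e - (j - 2) = e + 2 - j := by omega
  have idx6 : e - j + 1 = e + 1 - j := by omega
  -- the map φ₀ : G^{e+1-j} → F^{j-1}, x ↦ π^{e+1-j} x
  have hcod : ∀ x : ↥(PRext R e E F (e+1-j)),
      ((mulPi R e E (e+1-j)).comp (PRext R e E F (e+1-j)).subtype) x ∈ F (j - 1) := by
    intro x
    have h := x.2
    rw [mem_PRext, idx1] at h
    exact h
  set φ₀ : ↥(PRext R e E F (e+1-j)) →ₗ[R] ↥(F (j-1)) :=
    LinearMap.codRestrict (F (j-1)) ((mulPi R e E (e+1-j)).comp (PRext R e E F (e+1-j)).subtype)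
      hcod with hφ₀
  have hφ₀val : ∀ x, ((φ₀ x : ↥(F (j-1))) : E) = (π ^ (e+1-j) : TruncPoly R e) • (x : E) :=
    fun x => rfl
  set K' := ((F (j-2)) ⊔ (F j).map (mulPi R e E 1)).comap (F (j-1)).subtype with hK'
  set T' := ((PRext R e E F (e-j)) ⊔ (PRext R e E F (e+2-j)).map (mulPi R e E 1)).comap
      (PRext R e E F (e+1-j)).subtype with hT'
  set φ : ↥(PRext R e E F (e+1-j)) →ₗ[R] (↥(F (j-1)) ⧸ K') := K'.mkQ.comp φ₀ with hφ
  have hker : T' ≤ LinearMap.ker φ := by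
    intro x hx
    rw [hT', Submodule.mem_comap, Submodule.mem_sup] at hx
    obtain ⟨a, ha, b', hb', hsum⟩ := hx
    obtain ⟨b, hb, rfl⟩ := hb'
    rw [LinearMap.mem_ker, hφ, LinearMap.comp_apply, Submodule.mkQ_apply,
      Submodule.Quotient.mk_eq_zero, hK', Submodule.mem_comap]
    show ((φ₀ x : ↥(F (j-1))) : E) ∈ (F (j-2)) ⊔ (F j).map (mulPi R e E 1)
    rw [hφ₀val]
    have hsum2 : a + mulPi R e E 1 b = (x : E) := hsum
    have hxval : (x : E) = a + π • b := by
      rw [← hsum2, mulPi_apply, pow_one]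
    rw [hxval, smul_add]
    apply Submodule.add_mem
    · -- π^{e+1-j} • a  ∈  π·F^j  (right component)
      have haF : (π ^ (e-j) : TruncPoly R e) • a ∈ F j := by
        have h : a ∈ PRext R e E F (e-j) := ha
        rw [mem_PRext, idx2] at h
        exact h
      refine Submodule.mem_sup_right ⟨(π ^ (e-j) : TruncPoly R e) • a, haF, ?_⟩
      rw [mulPi_apply, pow_one, smul_smul, ← pow_succ', idx6]
    · -- π^{e+1-j} • (π • b) = π^{e+2-j} • b ∈ F^{j-2}  (left component)
      have hbF : (π ^ (e+2-j) : TruncPoly R e) • b ∈ F (j-2) := by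
        have h : b ∈ PRext R e E F (e+2-j) := hb
        rw [mem_PRext, idx3] at h
        exact h
      apply Submodule.mem_sup_left
      have heq : (π ^ (e+1-j) : TruncPoly R e) • (π • b) = (π ^ (e+2-j) : TruncPoly R e) • b := by
        rw [smul_smul, ← pow_succ, show e + 1 - j + 1 = e + 2 - j from by omega]
      rw [heq]
      exact hbF
  set ψ : (↥(PRext R e E F (e+1-j)) ⧸ T') →ₗ[R] (↥(F (j-1)) ⧸ K') :=
    Submodule.liftQ T' φ hker with hψ
  have hsurj : Function.Surjective ψ := by
    intro w
    obtain ⟨y, rfl⟩ := Submodule.Quotient.mk_surjective _ w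
    have hkill : (π ^ (j-1) : TruncPoly R e) • (y : E) = 0 :=
      filt_killed hF (j-1) (by omega) _ y.2
    obtain ⟨x₀, hx₀⟩ := module_divide R e E (m := j-1) (by omega) _ hkill
    rw [idx4] at hx₀
    have hx₀mem : x₀ ∈ PRext R e E F (e+1-j) := by
      rw [mem_PRext, idx1, ← hx₀]
      exact y.2
    refine ⟨Submodule.Quotient.mk (⟨x₀, hx₀mem⟩ : ↥(PRext R e E F (e+1-j))), ?_⟩
    rw [hψ, Submodule.liftQ_apply, hφ, LinearMap.comp_apply, Submodule.mkQ_apply]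
    congr 1
    apply Subtype.ext
    rw [hφ₀val]
    exact hx₀.symm
  have hinj : Function.Injective ψ := by
    rw [injective_iff_map_eq_zero]
    intro z hz
    obtain ⟨x, rfl⟩ := Submodule.Quotient.mk_surjective _ z
    rw [hψ, Submodule.liftQ_apply, hφ, LinearMap.comp_apply, Submodule.mkQ_apply,
      Submodule.Quotient.mk_eq_zero, hK', Submodule.mem_comap] at hz
    have hz' : (π ^ (e+1-j) : TruncPoly R e) • (x : E) ∈ (F (j-2)) ⊔ (F j).map (mulPi R e E 1) := by
      have := hz
      rwa [show ((F (j-1)).subtype (φ₀ x) : E) = (π ^ (e+1-j) : TruncPoly R e) • (x : E) from rfl]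
        at this
    rw [Submodule.mem_sup] at hz'
    obtain ⟨a, ha, g', hg', hsum⟩ := hz'
    obtain ⟨g, hg, rfl⟩ := hg'
    have hsum' : (π ^ (e+1-j) : TruncPoly R e) • (x : E) = a + π • g := by
      rw [← hsum, mulPi_apply, pow_one]
    -- g = π^{e-j} • h with h ∈ PRext (e-j)
    have hgkill : (π ^ j : TruncPoly R e) • g = 0 := filt_killed hF j hje g hg
    obtain ⟨h, hh⟩ := module_divide R e E (m := j) hje g hgkill
    have hhmem : h ∈ PRext R e E F (e-j) := by
      rw [mem_PRext, idx2, ← hh]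
      exact hg
    -- a = π^{e+2-j} • w with w ∈ PRext (e+2-j)
    have hakill : (π ^ (j-2) : TruncPoly R e) • a = 0 := filt_killed hF (j-2) (by omega) a ha
    obtain ⟨w, hw⟩ := module_divide R e E (m := j-2) (by omega) a hakill
    rw [idx5] at hw
    have hwmem : w ∈ PRext R e E F (e+2-j) := by
      rw [mem_PRext, idx3, ← hw]
      exact ha
    -- π^{e+1-j} • (x - h - π•w) = 0
    have hkey : (π ^ (e+1-j) : TruncPoly R e) • ((x : E) - h - π • w) = 0 := by
      rw [smul_sub, smul_sub, hsum']
      have e1 : (π ^ (e+1-j) : TruncPoly R e) • h = π • g := by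
        rw [hh, smul_smul, ← pow_succ']
        have : (π ^ (e - j + 1) : TruncPoly R e) • h = (π ^ (e+1-j) : TruncPoly R e) • h := by
          rw [idx6]
        rw [← this, pow_succ', mul_smul, ← hh]
      have e2 : (π ^ (e+1-j) : TruncPoly R e) • (π • w) = a := by
        rw [smul_smul, ← pow_succ]
        have h3 : e + 1 - j + 1 = e + 2 - j := by omega
        rw [h3, ← hw]
      rw [e1, e2]
      abel
    obtain ⟨v, hv⟩ := module_divide R e E (m := e+1-j) (by omega) _ hkey
    rw [idx1] at hv
    -- x = h + π•(w + π^{j-2}•v)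
    have hvz : (π ^ (j-2) : TruncPoly R e) • v ∈ PRext R e E F (e+2-j) := by
      rw [mem_PRext, idx3, smul_smul, ← pow_add]
      have h4 : e + 2 - j + (j - 2) = e := by omega
      have h0 : ((0 : TruncPoly R e)) • v = (0 : E) := zero_smul (TruncPoly R e) v
      rw [h4, piX_pow_e, h0]
      exact Submodule.zero_mem _
    rw [Submodule.Quotient.mk_eq_zero, hT', Submodule.mem_comap, Submodule.mem_sup]
    refine ⟨h, hhmem, π • (w + (π ^ (j-2) : TruncPoly R e) • v),
      ⟨w + (π ^ (j-2) : TruncPoly R e) • v,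
        Submodule.add_mem _ hwmem hvz, by rw [mulPi_apply, pow_one]⟩, ?_⟩
    have h5 : π • (w + (π ^ (j-2) : TruncPoly R e) • v)
        = π • w + (π ^ (j-1) : TruncPoly R e) • v := by
      rw [smul_add, smul_smul, ← pow_succ', show j - 2 + 1 = j - 1 from by omega]
    rw [h5]
    have h6 : (x : E) - h - π • w = (π ^ (j-1) : TruncPoly R e) • v := hv
    show h + (π • w + (π ^ (j-1) : TruncPoly R e) • v) = ((x : E))
    rw [← h6]
    abel
  exact ⟨(LinearEquiv.ofBijective ψ ⟨hinj, hsurj⟩)⟩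

end Part1

/-- **Compatibility of the primitive Hasse invariants with duality:**
`m^{[j]}(G) = m^{[j]}(G^D)` under the canonical isomorphism of determinant lines.
Let `R` be a commutative local ring and fix `2 ≤ j ≤ e`. Multiplication by `π` induces
`μ : F^{[j]}/F^{[j-1]} → F^{[j-1]}/F^{[j-2]}` (finite free of rank `d₁`) and
`μ^D : F^{[2e+2-j]}/F^{[2e+1-j]} → F^{[2e+1-j]}/F^{[2e-j]}` (finite free of rank `h₁-d₁`).
For any choice of bases, the determinants of the matrices of `μ` and `μ^D` differ by a unit
of `R`; in particular they generate the same ideal. -/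
theorem primitive_hasse_invariant_duality
    (R : Type*) [CommRing R] [IsLocalRing R] (e : ℕ) (he : 2 ≤ e) (h₁ d₁ : ℕ)
    (hd : 0 < d₁) (hdh : d₁ < h₁)
    (E : Type*) [AddCommGroup E] [Module (TruncPoly R e) E] [Module R E]
    [IsScalarTower R (TruncPoly R e) E]
    [Module.Finite (TruncPoly R e) E] [Module.Free (TruncPoly R e) E]
    (hrank : Module.finrank (TruncPoly R e) E = h₁)
    (F : ℕ → Submodule R E) (hF : IsPRFiltration R e E d₁ F)
    (j : ℕ) (hj1 : 2 ≤ j) (hje : j ≤ e)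
    (μ : (↥(F j) ⧸ (F (j - 1)).comap (F j).subtype) →ₗ[R]
        (↥(F (j - 1)) ⧸ (F (j - 2)).comap (F (j - 1)).subtype))
    (hμ : ∀ (x : F j) (hx : piX R e • (x : E) ∈ F (j - 1)),
      μ (Submodule.Quotient.mk x) =
        Submodule.Quotient.mk (⟨piX R e • (x : E), hx⟩ : F (j - 1)))
    (μD : (↥(PRext R e E F (e + 2 - j)) ⧸
          (PRext R e E F (e + 1 - j)).comap (PRext R e E F (e + 2 - j)).subtype) →ₗ[R]
        (↥(PRext R e E F (e + 1 - j)) ⧸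
          (PRext R e E F (e - j)).comap (PRext R e E F (e + 1 - j)).subtype))
    (hμD : ∀ (x : PRext R e E F (e + 2 - j))
        (hx : piX R e • (x : E) ∈ PRext R e E F (e + 1 - j)),
      μD (Submodule.Quotient.mk x) =
        Submodule.Quotient.mk (⟨piX R e • (x : E), hx⟩ : PRext R e E F (e + 1 - j)))
    (b₁ : Module.Basis (Fin d₁) R (↥(F j) ⧸ (F (j - 1)).comap (F j).subtype))
    (b₂ : Module.Basis (Fin d₁) R (↥(F (j - 1)) ⧸ (F (j - 2)).comap (F (j - 1)).subtype))
    (b₃ : Module.Basis (Fin (h₁ - d₁)) R (↥(PRext R e E F (e + 2 - j)) ⧸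
        (PRext R e E F (e + 1 - j)).comap (PRext R e E F (e + 2 - j)).subtype))
    (b₄ : Module.Basis (Fin (h₁ - d₁)) R (↥(PRext R e E F (e + 1 - j)) ⧸
        (PRext R e E F (e - j)).comap (PRext R e E F (e + 1 - j)).subtype)) :
    ∃ u : Rˣ,
      (LinearMap.toMatrix b₁ b₂ μ).det = (u : R) * (LinearMap.toMatrix b₃ b₄ μD).det := by
  classical
  have hπFj : ∀ x ∈ F j, piX R e • x ∈ F (j - 1) := by
    have h := hF.2.2.2.2 (j - 1) (by omega)
    rwa [show j - 1 + 1 = j from by omega] at h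
  have hπG : ∀ z ∈ PRext R e E F (e + 2 - j), piX R e • z ∈ PRext R e E F (e + 1 - j) := by
    intro z hz
    rw [mem_PRext] at hz ⊢
    rw [show e - (e + 2 - j) = j - 2 from by omega] at hz
    rw [show e - (e + 1 - j) = j - 1 from by omega]
    have heq : (piX R e ^ (e + 1 - j) : TruncPoly R e) • (piX R e • z)
        = (piX R e ^ (e + 2 - j) : TruncPoly R e) • z := by
      rw [smul_smul, ← pow_succ, show e + 1 - j + 1 = e + 2 - j from by omega]
    rw [heq]
    exact filt_mono hF (by omega) (by omega) hz
  obtain ⟨c1⟩ := coker_iso_quot (F (j - 2)) (F (j - 1)) (F j) μ hμ hπFj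
  obtain ⟨c2⟩ := coker_iso_quot (PRext R e E F (e - j)) (PRext R e E F (e + 1 - j))
    (PRext R e E F (e + 2 - j)) μD hμD hπG
  obtain ⟨c3⟩ := psi_iso hF hj1 hje (F := F) (d₁ := d₁)
  exact det_toMatrix_unit_of_coker_equiv b₁ b₂ b₃ b₄ μ μD
    ((c1.trans c3.symm).trans c2.symm)
end

section
/- Let R be a commutative ring, e ≥ 1 an integer, A := R[X]/(X^e), and π the image of X in A. Let E be a finite free A-module, E' an A-module, and V : E → E' an additive map satisfying V(π·x) = π·V(x) for all x ∈ E. Let 0 = F^{[0]} ⊆ F^{[1]} ⊆ ⋯ ⊆ F^{[e]} ⊆ E be a chain of R-submodules with π·F^{[j]} ⊆ F^{[j−1]} for all 1 ≤ j ≤ e, and let 0 = G^{[0]} ⊆ G^{[1]} ⊆ ⋯ ⊆ G^{[e]} ⊆ E' be a chain of R-submodules with π·G^{[j]} ⊆ G^{[j−1]} for all 1 ≤ j ≤ e. Assume V(E) ⊆ G^{[e]}. Then V(F^{[j]}) ⊆ G^{[j]} for all 0 ≤ j ≤ e. (In the application, V is the Verschiebung of a p-divisible group satisfying the Pappas–Rapoport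 condition and the chains are the Pappas–Rapoport filtrations; the statement says that the Verschiebung respects the Pappas–Rapoport filtration, so it induces the partial Hasse maps Ha^{[j]} on the graded pieces F^{[j]}/F^{[j−1]} → G^{[j]}/G^{[j−1]}.) -/
/-- In `A = R[X]/(X^e)`, the annihilator of `π^j` is generated by `π^{e-j}`. -/
lemma piX_ann (R : Type*) [CommRing R] (e j : ℕ) (hj : j ≤ e)
    (a : TruncPoly R e) (ha : piX R e ^ j * a = 0) :
    ∃ b, a = piX R e ^ (e - j) * b := by
  obtain ⟨f, rfl⟩ := Ideal.Quotient.mk_surjective a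
  rw [piX, ← map_pow, ← map_mul, Ideal.Quotient.eq_zero_iff_mem,
    Ideal.mem_span_singleton] at ha
  obtain ⟨g, hg⟩ := ha
  refine ⟨Ideal.Quotient.mk _ g, ?_⟩
  rw [piX, ← map_pow, ← map_mul]
  congr 1
  have hX : (Polynomial.X : Polynomial R) ^ j ∈ nonZeroDivisors (Polynomial R) :=
    (Polynomial.monic_X_pow j).mem_nonZeroDivisors
  have key : (f - Polynomial.X ^ (e - j) * g) * Polynomial.X ^ j = 0 := by
    rw [sub_mul, sub_eq_zero, mul_comm f, hg, mul_right_comm, ← pow_add,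
      show e - j + j = e from by omega]
  exact sub_eq_zero.mp (mem_nonZeroDivisors_iff_right.mp hX _ key)


/-- **The Verschiebung respects the Pappas–Rapoport filtration.**
Let `A = R[X]/(X^e)`, `π` the image of `X`, `E` a finite free `A`-module, `E'` an `A`-module,
and `V : E → E'` an additive map with `V(π·x) = π·V(x)`. Let `0 = F^{[0]} ⊆ ⋯ ⊆ F^{[e]} ⊆ E`
and `0 = G^{[0]} ⊆ ⋯ ⊆ G^{[e]} ⊆ E'` be chains of `R`-submodules with `π·F^{[j]} ⊆ F^{[j-1]}`
and `π·G^{[j]} ⊆ G^{[j-1]}`, and assume `V(E) ⊆ G^{[e]}`. Then `V(F^{[j]}) ⊆ G^{[j]}` for all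
`0 ≤ j ≤ e`. -/
theorem verschiebung_respects_pappas_rapoport_filtration
    (R : Type*) [CommRing R] (e : ℕ) (he : 1 ≤ e)
    (E : Type*) [AddCommGroup E] [Module (TruncPoly R e) E] [Module R E]
    [IsScalarTower R (TruncPoly R e) E]
    [Module.Finite (TruncPoly R e) E] [Module.Free (TruncPoly R e) E]
    (E' : Type*) [AddCommGroup E'] [Module (TruncPoly R e) E'] [Module R E']
    [IsScalarTower R (TruncPoly R e) E']
    (V : E →+ E') (hV : ∀ x : E, V (piX R e • x) = piX R e • V x)
    (F : ℕ → Submodule R E) (hF0 : F 0 = ⊥)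
    (hFmono : ∀ j < e, F j ≤ F (j + 1))
    (hFπ : ∀ j < e, ∀ x ∈ F (j + 1), piX R e • x ∈ F j)
    (G : ℕ → Submodule R E') (hG0 : G 0 = ⊥)
    (hGmono : ∀ j < e, G j ≤ G (j + 1))
    (hGπ : ∀ j < e, ∀ x ∈ G (j + 1), piX R e • x ∈ G j)
    (hVE : ∀ x : E, V x ∈ G e) :
    ∀ j ≤ e, ∀ x ∈ F j, V x ∈ G j := by
  set A := TruncPoly R e
  set π := piX R e with hπ
  -- Step 1: F j ⊆ ker π^j
  have hker : ∀ j, ∀ x ∈ F j, (π ^ j : A) • x = 0 := by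
    intro j
    induction j with
    | zero => intro x hx; rw [hF0] at hx; simp [(Submodule.mem_bot R).mp hx]
    | succ n ih =>
      intro x hx
      by_cases hn : n < e
      · have h1 : π • x ∈ F n := hFπ n hn x hx
        have := ih _ h1
        rw [pow_succ, mul_smul] at *
        rw [smul_comm] at this ⊢
        · exact this
      ·
        have hpe : (π : A) ^ e = 0 := by
          rw [hπ, piX, ← map_pow, Ideal.Quotient.eq_zero_iff_mem]
          exact Ideal.subset_span rfl
        have : (π : A) ^ (n + 1) = 0 := by
          have : e ≤ n + 1 := by omega
          calc (π:A)^(n+1) = π^e * π^(n+1-e) := by rw [← pow_add]; congr 1; omega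
          _ = 0 := by rw [hpe, zero_mul]
        rw [this]; exact zero_smul (TruncPoly R e) x
  -- Step 2: ker π^j ⊆ π^{e-j} E, using freeness
  have hdiv : ∀ j ≤ e, ∀ x : E, (π ^ j : A) • x = 0 → ∃ y : E, x = (π ^ (e - j) : A) • y := by
    intro j hj x hx
    obtain ⟨ι, b⟩ := Module.Free.exists_basis (R := A) (M := E)
    have hrep : ∀ i, (π ^ j : A) * b.repr x i = 0 := by
      intro i
      have : b.repr ((π ^ j : A) • x) = (π ^ j : A) • b.repr x := map_smul _ _ _
      rw [hx] at this
      have := congrFun (congrArg DFunLike.coe this.symm) i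
      simpa using this
    choose d hd using fun i => piX_ann R e j hj _ (hrep i)
    refine ⟨∑ i ∈ (b.repr x).support, d i • b i, ?_⟩
    conv_lhs => rw [← b.linearCombination_repr x]
    rw [Finsupp.linearCombination_apply, Finsupp.sum, Finset.smul_sum]
    refine Finset.sum_congr rfl fun i _ => ?_
    rw [hd i, mul_smul]
  -- Step 3: π^m sends G (j+m) into G j
  have hGdown : ∀ m j, j + m ≤ e → ∀ z ∈ G (j + m), (π ^ m : A) • z ∈ G j := by
    intro m
    induction m with
    | zero => intro j _ z hz; simpa using hz
    | succ n ih =>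
      intro j hjm z hz
      have h1 : π • z ∈ G (j + n) := hGπ (j + n) (by omega) z hz
      have := ih j (by omega) _ h1
      rw [pow_succ, mul_smul]
      exact this
  -- Step 4: V commutes with π^m
  have hVpow : ∀ (m : ℕ) (x : E), V ((π ^ m : A) • x) = (π ^ m : A) • V x := by
    intro m
    induction m with
    | zero => intro x; simp
    | succ n ih => intro x; rw [pow_succ', mul_smul, hV, ih, ← mul_smul, ← pow_succ']
  -- conclude
  intro j hj x hx
  obtain ⟨y, rfl⟩ := hdiv j hj x (hker j x hx)
  rw [hVpow]
  have := hGdown (e - j) j (by omega) (V y) (by convert hVE y using 2; omega)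
  exact this
end

section
/- Let R be a commutative ring, e ≥ 1 an integer, A := R[X]/(X^e), and π the image of X in A. Let E be a finite free A-module, E' an A-module, and V : E → E' an additive map satisfying V(π·x) = π·V(x) for all x ∈ E. Let 0 = G^{[0]} ⊆ G^{[1]} ⊆ ⋯ ⊆ G^{[e]} ⊆ E' be a chain of R-submodules with π·G^{[j]} ⊆ G^{[j−1]} for all 1 ≤ j ≤ e, and assume V(E) ⊆ G^{[e]}. Fix 1 ≤ j ≤ e and let x ∈ E be an element killed by π^j. Then: (i) there exists y ∈ E with π^{e−1}·y = π^{j−1}·x; (ii) for every such y, one has V(x) − π^{e−j}·V(y) ∈ G^{[j−1]}. (This is the factorization of the partial Hasse maps through the primitive Hasse maps: on the graded piece containing x, the map induced by V equals the composite of multiplication by π^{j−1}, the primitive Hasse map given by division by π^{e−1} followed by V, and multiplication by π^{e−j}; consequently the partial Hasse invariant ha^{[j]} is the product of the primitive Hasse invariants.) -/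
lemma piX_pow_mul_eq_zero {R : Type*} [CommRing R] {e k : ℕ} (hk : k ≤ e)
    (a : TruncPoly R e) (h : piX R e ^ k * a = 0) :
    ∃ b : TruncPoly R e, a = piX R e ^ (e - k) * b := by
  obtain ⟨f, rfl⟩ := Ideal.Quotient.mk_surjective a
  have h2 : (Ideal.Quotient.mk _ (Polynomial.X ^ k * f) : TruncPoly R e) = 0 := by
    rw [map_mul, map_pow]; exact h
  rw [Ideal.Quotient.eq_zero_iff_mem, Ideal.mem_span_singleton] at h2
  obtain ⟨g, hg⟩ := h2
  have hcancel : f = Polynomial.X ^ (e - k) * g := by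
    have hreg : IsRegular ((Polynomial.X : Polynomial R) ^ k) :=
      (Polynomial.monic_X_pow k).isRegular
    apply hreg.left
    show Polynomial.X ^ k * f = Polynomial.X ^ k * (Polynomial.X ^ (e - k) * g)
    rw [hg, ← mul_assoc, ← pow_add]
    congr 2
    omega
  refine ⟨Ideal.Quotient.mk _ g, ?_⟩
  rw [hcancel, map_mul, map_pow]
  rfl

lemma exists_of_piX_pow_smul_eq_zero {R : Type*} [CommRing R] {e k : ℕ} (hk : k ≤ e)
    {E : Type*} [AddCommGroup E] [Module (TruncPoly R e) E]
    [Module.Finite (TruncPoly R e) E] [Module.Free (TruncPoly R e) E]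
    (x : E) (h : piX R e ^ k • x = 0) : ∃ z : E, piX R e ^ (e - k) • z = x := by
  let b := Module.Free.chooseBasis (TruncPoly R e) E
  have hrepr : ∀ i, piX R e ^ k * b.repr x i = 0 := by
    intro i
    have := congrArg (fun v => b.repr v i) h
    simpa using this
  choose c hc using fun i => piX_pow_mul_eq_zero hk _ (hrepr i)
  refine ⟨∑ i, c i • b i, ?_⟩
  rw [Finset.smul_sum]
  conv_rhs => rw [← b.sum_repr x]
  refine Finset.sum_congr rfl fun i _ => ?_
  rw [smul_smul, ← hc i]


/-- **Factorization of the partial Hasse maps through the primitive Hasse maps.**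
Let `A = R[X]/(X^e)`, `π` the image of `X`, `E` a finite free `A`-module, `E'` an `A`-module,
`V : E → E'` an additive map with `V(π·x) = π·V(x)`, and `0 = G^{[0]} ⊆ ⋯ ⊆ G^{[e]} ⊆ E'` a
chain of `R`-submodules with `π·G^{[j]} ⊆ G^{[j-1]}` and `V(E) ⊆ G^{[e]}`. Fix `1 ≤ j ≤ e`
and let `x ∈ E` be killed by `π^j`. Then:
(i) there exists `y ∈ E` with `π^{e-1}·y = π^{j-1}·x`;
(ii) for every such `y`, `V(x) - π^{e-j}·V(y) ∈ G^{[j-1]}`. -/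
theorem partial_hasse_factors_through_primitive_hasse
    (R : Type*) [CommRing R] (e : ℕ) (he : 1 ≤ e)
    (E : Type*) [AddCommGroup E] [Module (TruncPoly R e) E] [Module R E]
    [IsScalarTower R (TruncPoly R e) E]
    [Module.Finite (TruncPoly R e) E] [Module.Free (TruncPoly R e) E]
    (E' : Type*) [AddCommGroup E'] [Module (TruncPoly R e) E'] [Module R E']
    [IsScalarTower R (TruncPoly R e) E']
    (V : E →+ E') (hV : ∀ x : E, V (piX R e • x) = piX R e • V x)
    (G : ℕ → Submodule R E') (hG0 : G 0 = ⊥)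
    (hGmono : ∀ j < e, G j ≤ G (j + 1))
    (hGπ : ∀ j < e, ∀ x ∈ G (j + 1), piX R e • x ∈ G j)
    (hVE : ∀ x : E, V x ∈ G e)
    (j : ℕ) (hj1 : 1 ≤ j) (hje : j ≤ e)
    (x : E) (hx : piX R e ^ j • x = 0) :
    (∃ y : E, piX R e ^ (e - 1) • y = piX R e ^ (j - 1) • x) ∧
    (∀ y : E, piX R e ^ (e - 1) • y = piX R e ^ (j - 1) • x →
      V x - piX R e ^ (e - j) • V y ∈ G (j - 1)) := by
  -- V commutes with powers of π
  have hVpow : ∀ (n : ℕ) (v : E), V (piX R e ^ n • v) = piX R e ^ n • V v := by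
    intro n
    induction n with
    | zero => intro v; simp
    | succ n ih =>
      intro v
      rw [pow_succ', mul_smul, hV, ih, ← mul_smul, ← pow_succ']
  -- iterated filtration lemma
  have hGiter : ∀ (m : ℕ) (n : ℕ), m ≤ n → n ≤ e → ∀ w ∈ G n,
      piX R e ^ m • w ∈ G (n - m) := by
    intro m
    induction m with
    | zero => intro n _ _ w hw; simpa using hw
    | succ m ih =>
      intro n hmn hne w hw
      have h1 : piX R e ^ m • w ∈ G (n - m) := ih n (by omega) hne w hw
      have h2 : piX R e • (piX R e ^ m • w) ∈ G (n - m - 1) := by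
        have := hGπ (n - m - 1) (by omega)
        have heq : n - m - 1 + 1 = n - m := by omega
        rw [heq] at this
        exact this _ h1
      have h3 : n - (m + 1) = n - m - 1 := by omega
      rw [h3, pow_succ', mul_smul]
      exact h2
  -- x = π^(e-j) • z
  obtain ⟨z, hz⟩ := exists_of_piX_pow_smul_eq_zero hje x hx
  have hkey : ∀ v : E, piX R e ^ (j - 1) • (piX R e ^ (e - j) • v) = piX R e ^ (e - 1) • v := by
    intro v
    rw [← mul_smul, ← pow_add]
    congr 2
    omega
  constructor
  · exact ⟨z, by rw [← hz, hkey]⟩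
  · intro y hy
    have hyz : piX R e ^ (e - 1) • (y - z) = 0 := by
      rw [smul_sub, hy, ← hz, hkey, sub_self]
    obtain ⟨w, hw⟩ := exists_of_piX_pow_smul_eq_zero (by omega : e - 1 ≤ e) _ hyz
    have he1 : e - (e - 1) = 1 := by omega
    rw [he1, pow_one] at hw
    -- V x - π^(e-j) • V y = -(π^(e-j) • π • V w)
    have hcalc : V x - piX R e ^ (e - j) • V y = -(piX R e ^ (e - j) • (piX R e • V w)) := by
      have h1 : V x = piX R e ^ (e - j) • V z := by rw [← hz, hVpow]
      have h2 : V y = V z + piX R e • V w := by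
        have : y = z + piX R e • w := by
          rw [hw]; abel
        rw [this, map_add, hV]
      rw [h1, h2, smul_add]
      abel
    rw [hcalc]
    apply neg_mem
    have hm : piX R e ^ (e - j + 1) • V w ∈ G (e - (e - j + 1)) :=
      hGiter (e - j + 1) e (by omega) le_rfl _ (hVE w)
    have heq : e - (e - j + 1) = j - 1 := by omega
    rw [heq] at hm
    have : piX R e ^ (e - j) • (piX R e • V w) = piX R e ^ (e - j + 1) • V w := by
      rw [← mul_smul, ← pow_succ]
    rw [this]
    exact hm
end
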